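/- Let p be a stochastic choice function rationalizable by an MSC model on a menu M with matrices Q, and suppose the model is not reversible on M with respect to p, i.e. there exist k,l ∈ M with p(k|M)·q_kl(M) ≠ p(l|M)·q_lk(M). Then there exists a positive sign-consistent cycle with respect to p(·|M) on some subset M' ⊆ M, i.e. a cycle all of whose pairs (i,j) satisfy δ_ij(M) > 0. -/

import Mathlib

open Finset

variable {X : Type*} [DecidableEq X]

/-- The menus relevant to an MSC model on `M`: `M` itself and the two-element subsets of `M`. -/
def RelMenu (M N : Finset X) : Prop := N = M ∨ (N ⊆ M ∧ N.card = 2)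

/-- `Q` is row-stochastic on `N`: nonnegative entries, rows summing to 1. -/
def RowStochOn (N : Finset X) (Q : X → X → ℝ) : Prop :=
  (∀ i ∈ N, ∀ j ∈ N, 0 ≤ Q i j) ∧ ∀ i ∈ N, ∑ j ∈ N, Q i j = 1

/-- The axioms of an MSC model on the menu `M`: row-stochasticity on relevant menus,
(A1) prolonged consideration, (A2) pairwise comparability on binary sets, (A3) TR-IIA. -/
def IsMSC (M : Finset X) (q : Finset X → X → X → ℝ) : Prop :=
  (∀ N, RelMenu M N → RowStochOn N (q N)) ∧
  (∀ N, RelMenu M N → ∀ i ∈ N, 0 < q N i i) ∧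
  (∀ i ∈ M, ∀ j ∈ M, i ≠ j → q {i, j} i j = 0 → 0 < q {i, j} j i) ∧
  (∀ N, RelMenu M N → ∀ i ∈ N, ∀ j ∈ N, i ≠ j →
    q {i, j} i j * q N j i = q {i, j} j i * q N i j)

/-- `p` is a stochastic choice function. -/
def IsSCF (p : Finset X → X → ℝ) : Prop :=
  ∀ N : Finset X, N.Nonempty →
    (∀ i, 0 ≤ p N i) ∧ (∀ i, i ∉ N → p N i = 0) ∧ ∑ i ∈ N, p N i = 1

/-- `σ` is a stationary (row) vector of `Q` on `N`, i.e. `σ (I - Q) = 0` on `N`. -/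
def StationaryOn (N : Finset X) (Q : X → X → ℝ) (σ : X → ℝ) : Prop :=
  ∀ j ∈ N, ∑ i ∈ N, σ i * Q i j = σ j

/-- The MSC model `q` rationalizes `p` on the menu `M`. -/
def Rationalizes (M : Finset X) (q : Finset X → X → X → ℝ) (p : Finset X → X → ℝ) : Prop :=
  IsMSC M q ∧ ∀ N, RelMenu M N → StationaryOn N (q N) (p N)

/-- The weighted difference in choice probabilities `δ_ij(M)`. -/
def delta (p : Finset X → X → ℝ) (M : Finset X) (i j : X) : ℝ :=
  p M i * p {i, j} j - p {i, j} i * p M j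

/-- The set of ordered pairs of consecutive elements (with wrap-around) of a list. -/
def cyclePairs (c : List X) : List (X × X) := c.zip (c.rotate 1)

/-- `c` is a cycle of distinct alternatives lying in (a subset of) `M`. -/
def IsCycleIn (M : Finset X) (c : List X) : Prop :=
  c.Nodup ∧ 2 ≤ c.length ∧ ∀ x ∈ c, x ∈ M

/-- All pairs of the cycle have strictly positive `δ`. -/
def PosConsistent (p : Finset X → X → ℝ) (M : Finset X) (c : List X) : Prop :=
  ∀ pr ∈ cyclePairs c, 0 < delta p M pr.1 pr.2

/-- All pairs of the cycle have strictly negative `δ`. -/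
def NegConsistent (p : Finset X → X → ℝ) (M : Finset X) (c : List X) : Prop :=
  ∀ pr ∈ cyclePairs c, delta p M pr.1 pr.2 < 0

/-- `p(·|M)` is bounded in a cycle over the pair `(i, j)`. -/
def BoundedInCycle (p : Finset X → X → ℝ) (M : Finset X) (i j : X) : Prop :=
  delta p M i j = 0 ∨
    ∃ c : List X, IsCycleIn M c ∧ (i, j) ∈ cyclePairs c ∧
      (PosConsistent p M c ∨ NegConsistent p M c)


/-- The net flow from `u` to `v` in the menu `M`. -/
noncomputable def flw (p : Finset X → X → ℝ) (q : Finset X → X → X → ℝ)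
    (M : Finset X) (u v : X) : ℝ :=
  p M u * q M u v - p M v * q M v u

lemma flw_self (p : Finset X → X → ℝ) (q : Finset X → X → X → ℝ)
    (M : Finset X) (u : X) : flw p q M u u = 0 := by
  simp [flw]

/-- Net flow conservation at each vertex. -/
lemma flow_sum_zero (M : Finset X)
    (p : Finset X → X → ℝ) (q : Finset X → X → X → ℝ)
    (hrat : Rationalizes M q p) {v : X} (hv : v ∈ M) :
    ∑ w ∈ M, flw p q M v w = 0 := by
  have hrow : ∑ w ∈ M, q M v w = 1 := (hrat.1.1 M (Or.inl rfl)).2 v hv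
  have hst : ∑ w ∈ M, p M w * q M w v = p M v := hrat.2 M (Or.inl rfl) v hv
  unfold flw
  rw [Finset.sum_sub_distrib, ← Finset.mul_sum, hrow, hst]
  ring

/-- If there is positive inflow at `v`, there is positive outflow from `v`. -/
lemma exists_pos_out (M : Finset X)
    (p : Finset X → X → ℝ) (q : Finset X → X → X → ℝ)
    (hrat : Rationalizes M q p) {u v : X} (hu : u ∈ M) (hv : v ∈ M)
    (hpos : 0 < flw p q M u v) : ∃ w ∈ M, 0 < flw p q M v w := by
  by_contra h
  push_neg at h
  have hneg : flw p q M v u < 0 := by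
    unfold flw at hpos ⊢; linarith
  have hlt : ∑ w ∈ M, flw p q M v w < ∑ w ∈ M, (0 : ℝ) :=
    Finset.sum_lt_sum h ⟨u, hu, by simpa using hneg⟩
  rw [Finset.sum_const_zero, flow_sum_zero M p q hrat hv] at hlt
  exact lt_irrefl _ hlt

/-- If flow is strictly positive, then delta is strictly positive. -/
lemma delta_pos_of_flow_pos (M : Finset X)
    (p : Finset X → X → ℝ) (hp : IsSCF p)
    (q : Finset X → X → X → ℝ) (hrat : Rationalizes M q p)
    {i j : X} (hi : i ∈ M) (hj : j ∈ M) (hij : i ≠ j)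
    (hF : 0 < flw p q M i j) :
    0 < delta p M i j := by
  rw [flw] at hF
  have hrel : RelMenu M ({i, j} : Finset X) := by
    refine Or.inr ⟨?_, Finset.card_pair hij⟩
    intro x hx
    rcases Finset.mem_insert.1 hx with h | h
    · exact h ▸ hi
    · exact (Finset.mem_singleton.1 h) ▸ hj
  have hiN : i ∈ ({i, j} : Finset X) := Finset.mem_insert_self _ _
  have hjN : j ∈ ({i, j} : Finset X) := Finset.mem_insert_of_mem (Finset.mem_singleton_self _)
  have hrs := hrat.1.1 _ hrel
  set a := q {i, j} i j with ha
  set b := q {i, j} j i with hb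
  have ha0 : 0 ≤ a := hrs.1 i hiN j hjN
  have hb0 : 0 ≤ b := hrs.1 j hjN i hiN
  have hrowj : q {i, j} j j + b = 1 := by
    have := hrs.2 j hjN
    rwa [Finset.sum_pair hij, add_comm] at this
  -- a + b > 0
  have hab : 0 < a + b := by
    rcases lt_or_eq_of_le ha0 with h | h
    · linarith
    · have := hrat.1.2.2.1 i hi j hj hij h.symm
      linarith
  -- pairwise stationarity at j: p' i * a = p' j * b
  have hst : p {i, j} i * a = p {i, j} j * b := by
    have h1 := hrat.2 _ hrel j hjN
    rw [Finset.sum_pair hij] at h1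
    rw [← ha] at h1
    linear_combination h1 - p {i, j} j * hrowj
  have hNne : ({i, j} : Finset X).Nonempty := ⟨i, hiN⟩
  have hpsum : p {i, j} i + p {i, j} j = 1 := by
    have := (hp _ hNne).2.2
    rwa [Finset.sum_pair hij] at this
  -- TR-IIA
  have htr : a * q M j i = b * q M i j := hrat.1.2.2.2 M (Or.inl rfl) i hi j hj hij
  have key1 : (a + b) * delta p M i j = a * p M i - b * p M j := by
    unfold delta
    linear_combination (-(p M i + p M j)) * hst + (a * p M i - b * p M j) * hpsum
  have key2 : (a + b) * (p M i * q M i j - p M j * q M j i)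
      = (q M i j + q M j i) * (a * p M i - b * p M j) := by
    linear_combination (-(p M i + p M j)) * htr
  have hq1 : 0 ≤ q M i j := (hrat.1.1 M (Or.inl rfl)).1 i hi j hj
  have hq2 : 0 ≤ q M j i := (hrat.1.1 M (Or.inl rfl)).1 j hj i hi
  have hD : 0 < a * p M i - b * p M j := by
    nlinarith
  nlinarith

/-- Characterization of membership in `cyclePairs`. -/
lemma cyclePairs_spec {α : Type*} {c : List α} {pr : α × α} (h : pr ∈ cyclePairs c) :
    ∃ i : ℕ, ∃ h1 : i < c.length, ∃ h2 : (i + 1) % c.length < c.length,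
      pr.1 = c.get ⟨i, h1⟩ ∧ pr.2 = c.get ⟨(i + 1) % c.length, h2⟩ := by
  unfold cyclePairs at h
  obtain ⟨⟨i, hi⟩, hpr⟩ := List.mem_iff_get.1 h
  have hlen : (c.zip (c.rotate 1)).length = c.length := by
    rw [List.length_zip, List.length_rotate, min_self]
  have hi' : i < c.length := hlen ▸ hi
  have h2 : (i + 1) % c.length < c.length := Nat.mod_lt _ (by omega)
  rw [List.get_eq_getElem, List.getElem_zip] at hpr
  refine ⟨i, hi', h2, ?_, ?_⟩
  · rw [← hpr]; rfl
  · rw [← hpr]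
    simp only
    rw [List.getElem_rotate]; rfl
/-- If `p` is rationalizable by an MSC model on `M` that is not reversible on `M`
(detailed balance `p(k|M)q_kl(M) = p(l|M)q_lk(M)` fails for some pair), then there is a
positive sign-consistent cycle on some subset of `M` with respect to `p(·|M)`. -/
theorem stmt2 (M : Finset X) (hM : M.Nonempty)
    (p : Finset X → X → ℝ) (hp : IsSCF p)
    (q : Finset X → X → X → ℝ) (hrat : Rationalizes M q p)
    (hnrev : ∃ k ∈ M, ∃ l ∈ M, p M k * q M k l ≠ p M l * q M l k) :
    ∃ c : List X, IsCycleIn M c ∧ PosConsistent p M c := by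
  classical
  obtain ⟨k, hk, l, hl, hne⟩ := hnrev
  -- find a starting pair with strictly positive net flow
  have hstart : ∃ u ∈ M, ∃ v ∈ M, 0 < flw p q M u v := by
    rcases lt_or_gt_of_ne (sub_ne_zero.mpr hne) with h | h
    · exact ⟨l, hl, k, hk, by unfold flw; linarith⟩
    · exact ⟨k, hk, l, hl, by unfold flw; linarith⟩
  obtain ⟨u0, hu0, v0, hv0, hF0⟩ := hstart
  -- the set of vertices with positive outflow
  set S : Finset X := M.filter (fun v => ∃ w ∈ M, 0 < flw p q M v w) with hS
  have hSM : ∀ x ∈ S, x ∈ M := fun x hx => (Finset.mem_filter.1 hx).1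
  have hstep : ∀ v ∈ S, ∃ w ∈ S, 0 < flw p q M v w := by
    intro v hv
    obtain ⟨hvM, w, hwM, hpos⟩ := Finset.mem_filter.1 hv
    exact ⟨w, Finset.mem_filter.2 ⟨hwM, exists_pos_out M p q hrat hvM hwM hpos⟩, hpos⟩
  have hu0S : u0 ∈ S := Finset.mem_filter.2 ⟨hu0, v0, hv0, hF0⟩
  -- a successor function on the subtype of S
  have hch : ∀ v : {x // x ∈ S}, ∃ w : {x // x ∈ S}, 0 < flw p q M v.1 w.1 := by
    intro v
    obtain ⟨w, hwS, h⟩ := hstep v.1 v.2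
    exact ⟨⟨w, hwS⟩, h⟩
  choose f hf using hch
  -- the iterates of f must repeat; get a periodic point
  obtain ⟨m0, n0, hmn0, heq0⟩ :=
    Finite.exists_ne_map_eq_of_infinite (fun n : ℕ => f^[n] (⟨u0, hu0S⟩ : {x // x ∈ S}))
  obtain ⟨m, n, hlt, heq⟩ : ∃ m n : ℕ, m < n ∧
      f^[m] (⟨u0, hu0S⟩ : {x // x ∈ S}) = f^[n] ⟨u0, hu0S⟩ := by
    rcases hmn0.lt_or_gt with h | h
    · exact ⟨m0, n0, h, heq0⟩
    · exact ⟨n0, m0, h, heq0.symm⟩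
  obtain ⟨x', t0, ht0, hpt⟩ : ∃ (x' : {x // x ∈ S}) (t : ℕ), 0 < t ∧ f^[t] x' = x' := by
    refine ⟨f^[m] ⟨u0, hu0S⟩, n - m, by omega, ?_⟩
    rw [← Function.iterate_add_apply, Nat.sub_add_cancel hlt.le]
    exact heq.symm
  have hex : ∃ t, 0 < t ∧ f^[t] x' = x' := ⟨t0, ht0, hpt⟩
  set T : ℕ := Nat.find hex with hT
  obtain ⟨hTpos, hTper⟩ : 0 < T ∧ f^[T] x' = x' := Nat.find_spec hex
  have hmin : ∀ t, 0 < t → t < T → f^[t] x' ≠ x' := by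
    intro t h1 h2 h3
    exact Nat.find_min hex h2 ⟨h1, h3⟩
  -- for each iterate, the flow to the next one is positive
  have hfpos : ∀ nn : ℕ, 0 < flw p q M (f^[nn] x').1 (f^[nn + 1] x').1 := by
    intro nn
    rw [Function.iterate_succ_apply']
    exact hf _
  -- T ≥ 2
  have hT2 : 2 ≤ T := by
    by_contra h
    have hT1 : T = 1 := by omega
    have h1 := hf x'
    have hfx : f x' = x' := by
      have := hTper
      rw [hT1] at this
      simpa using this
    rw [hfx, flw_self] at h1
    exact lt_irrefl _ h1
  -- the cycle
  set g : ℕ → X := fun nn => ((f^[nn] x' : {x // x ∈ S}) : X) with hg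
  set c : List X := (List.range T).map g with hc
  have hlen : c.length = T := by simp [hc]
  have hgS : ∀ nn, g nn ∈ S := fun nn => (f^[nn] x').2
  have hmemM : ∀ x ∈ c, x ∈ M := by
    intro x hx
    obtain ⟨nn, _, rfl⟩ := List.mem_map.1 hx
    exact hSM _ (hgS nn)
  -- injectivity of g on range T
  have hginj : ∀ i ∈ List.range T, ∀ j ∈ List.range T, g i = g j → i = j := by
    have key : ∀ i j : ℕ, i < j → j < T → g i ≠ g j := by
      intro i j hij hjT hgij
      have hsub : f^[i] x' = f^[j] x' := Subtype.coe_injective hgij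
      have h2 : f^[T - j] (f^[i] x') = f^[T - j] (f^[j] x') := by rw [hsub]
      rw [← Function.iterate_add_apply, ← Function.iterate_add_apply,
        Nat.sub_add_cancel hjT.le, hTper] at h2
      exact hmin (T - j + i) (by omega) (by omega) h2
    intro i hi j hj hgij
    rw [List.mem_range] at hi hj
    rcases lt_trichotomy i j with h | h | h
    · exact absurd hgij (key i j h hj)
    · exact h
    · exact absurd hgij.symm (key j i h hi)
  have hnodup : c.Nodup := List.Nodup.map_on hginj (List.nodup_range (n := T))
  -- the get-elements of c
  have hcg : ∀ (i : ℕ) (h : i < c.length), c.get ⟨i, h⟩ = g i := by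
    intro i h
    simp [hc, List.get_eq_getElem]
  -- wrap-around step
  have hwrap : ∀ nn, nn < T → g ((nn + 1) % T) = ((f (f^[nn] x') : {x // x ∈ S}) : X) := by
    intro nn hnn
    rcases Nat.lt_or_ge (nn + 1) T with h | h
    · rw [Nat.mod_eq_of_lt h, hg]
      simp [Function.iterate_succ_apply']
    · have hTeq : nn + 1 = T := by omega
      have hmod : (nn + 1) % T = 0 := by rw [hTeq]; simp
      have hxx : f (f^[nn] x') = x' := by
        have hx1 : f^[nn + 1] x' = x' := by rw [hTeq]; exact hTper
        rwa [Function.iterate_succ_apply'] at hx1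
      rw [hmod, hg]
      simp only [Function.iterate_zero_apply]
      exact congrArg _ hxx.symm
  refine ⟨c, ⟨hnodup, by omega, hmemM⟩, ?_⟩
  intro pr hpr
  obtain ⟨i, h1, h2, hpr1, hpr2⟩ := cyclePairs_spec hpr
  have hiT : i < T := by omega
  rw [hcg i h1] at hpr1
  rw [hcg _ h2, hlen, hwrap i hiT] at hpr2
  have hFpos : 0 < flw p q M pr.1 pr.2 := by
    rw [hpr1, hpr2]
    exact hf _
  have hp1M : pr.1 ∈ M := by rw [hpr1]; exact hSM _ (hgS i)
  have hp2M : pr.2 ∈ M := by rw [hpr2]; exact hSM _ (f (f^[i] x')).2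
  have hne12 : pr.1 ≠ pr.2 := by
    intro h
    rw [h, flw_self] at hFpos
    exact lt_irrefl _ hFpos
  exact delta_pos_of_flow_pos M p hp q hrat hp1M hp2M hne12 hFpos
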